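/- In the matrix-decomposition setting below, [V_00 ⊗ Λ(0,0), V_00 ⊗ Λ(0,0)] ⊆ L, i.e. the commutator of any two elements of V_00 ⊗ Λ(0,0) lies in L. -/

import Mathlib

/-! Statement 14: in the matrix-decomposition setting, `[V_00 ⊗ Λ(0,0), V_00 ⊗ Λ(0,0)] ⊆ L`. -/

open scoped TensorProduct DirectSum

universe u v w

/-- `n` extended to `Î = I ∪ {0}` (`none` playing the role of `0`), with `n_0 = 1`. -/
abbrev nopt {I : Type} (n : I → ℕ) : Option I → ℕ
  | none => 1
  | some i => n i

variable (F : Type u) [Field F] [IsAlgClosed F]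
  {I : Type} [Fintype I] [DecidableEq I] [Nonempty I] {n : I → ℕ}
  {Λ : Option I → Option I → Type v}
  [∀ i j, AddCommGroup (Λ i j)] [∀ i j, Module F (Λ i j)]
  {A : Type w} [NonUnitalRing A] [Module F A] [SMulCommClass F A A] [IsScalarTower F A A]

/-- The image in `A` of an element `u ∈ V_ij ⊗ Λ(i,j)` under the identification `ψ`
of `A` with `⊕_{i,j ∈ Î} V_ij ⊗ Λ(i,j)`. -/
noncomputable def emb (ψ : (⨁ p : Option I × Option I,
      Matrix (Fin (nopt n p.1)) (Fin (nopt n p.2)) F ⊗[F] Λ p.1 p.2) ≃ₗ[F] A)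
    (p : Option I × Option I)
    (u : Matrix (Fin (nopt n p.1)) (Fin (nopt n p.2)) F ⊗[F] Λ p.1 p.2) : A :=
  ψ (DirectSum.lof F (Option I × Option I)
    (fun q => Matrix (Fin (nopt n q.1)) (Fin (nopt n q.2)) F ⊗[F] Λ q.1 q.2) p u)

/-- The image in `A` of a pure tensor `X ⊗ a ∈ V_ij ⊗ Λ(i,j)`. -/
noncomputable def elt (ψ : (⨁ p : Option I × Option I,
      Matrix (Fin (nopt n p.1)) (Fin (nopt n p.2)) F ⊗[F] Λ p.1 p.2) ≃ₗ[F] A)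
    (i j : Option I) (X : Matrix (Fin (nopt n i)) (Fin (nopt n j)) F) (a : Λ i j) : A :=
  emb F ψ (i, j) (X ⊗ₜ a)

/-- The union of the subspaces `V'_ij ⊗ Λ(i,j)`, `(i,j) ≠ (0,0)`, where `V'_ii` consists
of the trace-zero matrices and `V'_ij = V_ij` for `i ≠ j`. -/
def lieGens (ψ : (⨁ p : Option I × Option I,
      Matrix (Fin (nopt n p.1)) (Fin (nopt n p.2)) F ⊗[F] Λ p.1 p.2) ≃ₗ[F] A) : Set A :=
  {x | ∃ (i j : Option I) (X : Matrix (Fin (nopt n i)) (Fin (nopt n j)) F) (a : Λ i j),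
      i ≠ j ∧ x = elt F ψ i j X a} ∪
  {x | ∃ (i : I) (X : Matrix (Fin (n i)) (Fin (n i)) F) (a : Λ (some i) (some i)),
      Matrix.trace X = 0 ∧ x = elt F ψ (some i) (some i) X a}

/-- `L`: the Lie subalgebra of `A` (as a subspace closed under commutators) generated by
the subspaces `V'_ij ⊗ Λ(i,j)` over all `(i,j) ≠ (0,0)`. -/
def Lsub (ψ : (⨁ p : Option I × Option I,
      Matrix (Fin (nopt n p.1)) (Fin (nopt n p.2)) F ⊗[F] Λ p.1 p.2) ≃ₗ[F] A) :
    Submodule F A :=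
  sInf {J : Submodule F A | lieGens F ψ ⊆ J ∧ ∀ x ∈ J, ∀ y ∈ J, x * y - y * x ∈ J}

variable (mu : ∀ i j k : Option I, Λ i j →ₗ[F] Λ j k →ₗ[F] Λ i k)
  (ψ : (⨁ p : Option I × Option I,
      Matrix (Fin (nopt n p.1)) (Fin (nopt n p.2)) F ⊗[F] Λ p.1 p.2) ≃ₗ[F] A)

section Aux
set_option linter.unusedSectionVars false

lemma sbm_mul {m n' q : Type} [Fintype n'] [DecidableEq m] [DecidableEq n'] [DecidableEq q]
    (i : m) (j k : n') (l : q) (c d : F) :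
    Matrix.single i j c * Matrix.single k l d
      = if j = k then Matrix.single i l (c * d) else 0 := by
  ext a b
  rw [Matrix.mul_apply, Finset.sum_eq_single j]
  · by_cases hjk : j = k <;> by_cases hia : i = a <;> by_cases hlb : l = b <;>
      simp [Matrix.single, Matrix.of_apply, hjk, hia, hlb] <;>
      (intro h; exact absurd h.symm hjk)
  · intro x _ hx
    simp [Ne.symm hx]
  · simp

lemma mem_Lsub_of_gen {x : A} (h : x ∈ lieGens F ψ) : x ∈ Lsub F ψ := by
  rw [Lsub, Submodule.mem_sInf]
  exact fun J hJ => hJ.1 h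

lemma bracket_mem {x y : A} (hx : x ∈ Lsub F ψ) (hy : y ∈ Lsub F ψ) :
    x * y - y * x ∈ Lsub F ψ := by
  rw [Lsub, Submodule.mem_sInf] at *
  exact fun J hJ => hJ.2 x (hx J hJ) y (hy J hJ)

lemma gen_ne_mem {i j : Option I} (hij : i ≠ j)
    (X : Matrix (Fin (nopt n i)) (Fin (nopt n j)) F) (a : Λ i j) :
    elt F ψ i j X a ∈ Lsub F ψ :=
  mem_Lsub_of_gen F ψ (Or.inl ⟨i, j, X, a, hij, rfl⟩)

lemma gen_tr_mem (i : I) (X : Matrix (Fin (n i)) (Fin (n i)) F)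
    (hX : Matrix.trace X = 0) (a : Λ (some i) (some i)) :
    elt F ψ (some i) (some i) X a ∈ Lsub F ψ :=
  mem_Lsub_of_gen F ψ (Or.inr ⟨i, X, a, hX, rfl⟩)

lemma elt_sub_left (i j : Option I) (X Y : Matrix (Fin (nopt n i)) (Fin (nopt n j)) F)
    (a : Λ i j) : elt F ψ i j (X - Y) a = elt F ψ i j X a - elt F ψ i j Y a := by
  simp [elt, emb, TensorProduct.sub_tmul, map_sub]

lemma elt_add_right (i j : Option I) (X : Matrix (Fin (nopt n i)) (Fin (nopt n j)) F)
    (a b : Λ i j) : elt F ψ i j X (a + b) = elt F ψ i j X a + elt F ψ i j X b := by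
  simp [elt, emb, TensorProduct.tmul_add, map_add]

lemma elt_sub_right (i j : Option I) (X : Matrix (Fin (nopt n i)) (Fin (nopt n j)) F)
    (a b : Λ i j) : elt F ψ i j X (a - b) = elt F ψ i j X a - elt F ψ i j X b := by
  simp [elt, emb, TensorProduct.tmul_sub, map_sub]

lemma elt_smul_right (i j : Option I) (X : Matrix (Fin (nopt n i)) (Fin (nopt n j)) F)
    (r : F) (a : Λ i j) : elt F ψ i j X (r • a) = r • elt F ψ i j X a := by
  simp [elt, emb, TensorProduct.tmul_smul, map_smul]

lemma elt_smul_left (i j : Option I) (X : Matrix (Fin (nopt n i)) (Fin (nopt n j)) F)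
    (r : F) (a : Λ i j) : elt F ψ i j (r • X) a = r • elt F ψ i j X a := by
  simp only [elt, emb, ← TensorProduct.smul_tmul', map_smul]

lemma elt_zero_right (i j : Option I) (X : Matrix (Fin (nopt n i)) (Fin (nopt n j)) F) :
    elt F ψ i j X (0 : Λ i j) = 0 := by
  simp [elt, emb, TensorProduct.tmul_zero]

end Aux


set_option linter.unusedSectionVars false in
lemma stepA (hmul : ∀ (i j k : Option I) (X : Matrix (Fin (nopt n i)) (Fin (nopt n j)) F)
      (a : Λ i j) (Y : Matrix (Fin (nopt n j)) (Fin (nopt n k)) F) (b : Λ j k),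
      elt F ψ i j X a * elt F ψ j k Y b = elt F ψ i k (X * Y) (mu i j k a b))
    (i : I) (h2 : 2 ≤ n i) (α β : Λ (some i) (some i)) :
    elt F ψ (some i) (some i)
      (Matrix.single (⟨0, show 0 < n i by omega⟩ : Fin (n i)) ⟨0, show 0 < n i by omega⟩ (1 : F))
      (mu (some i) (some i) (some i) α β - mu (some i) (some i) (some i) β α) ∈ Lsub F ψ := by
  set f0 : Fin (n i) := ⟨0, show 0 < n i by omega⟩ with hf0
  set f1 : Fin (n i) := ⟨1, show 1 < n i by omega⟩ with hf1
  have h01 : f0 ≠ f1 := by simp [hf0, hf1, Fin.ext_iff]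
  have hx : elt F ψ (some i) (some i) (Matrix.single f0 f1 (1 : F)) α ∈ Lsub F ψ :=
    gen_tr_mem F ψ i _ (Matrix.trace_single_eq_of_ne _ _ _ h01) α
  have hy : elt F ψ (some i) (some i) (Matrix.single f1 f0 (1 : F)) β ∈ Lsub F ψ :=
    gen_tr_mem F ψ i _ (Matrix.trace_single_eq_of_ne _ _ _ (Ne.symm h01)) β
  have hb := bracket_mem F ψ hx hy
  rw [hmul, hmul, sbm_mul, sbm_mul, if_pos rfl, if_pos rfl, one_mul] at hb
  have hz : elt F ψ (some i) (some i)
      (Matrix.single f0 f0 (1 : F) - Matrix.single f1 f1 (1 : F))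
      (mu (some i) (some i) (some i) β α) ∈ Lsub F ψ :=
    gen_tr_mem F ψ i _ (by
      rw [Matrix.trace_sub, Matrix.trace_single_eq_same, Matrix.trace_single_eq_same,
        sub_self]) _
  have hmem := Submodule.sub_mem _ hb hz
  rw [elt_sub_left] at hmem
  rw [elt_sub_right]
  have heq : elt F ψ (some i) (some i) (Matrix.single f0 f0 (1 : F))
        (mu (some i) (some i) (some i) α β)
      - elt F ψ (some i) (some i) (Matrix.single f0 f0 (1 : F))
        (mu (some i) (some i) (some i) β α)
    = elt F ψ (some i) (some i) (Matrix.single f0 f0 (1 : F))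
        (mu (some i) (some i) (some i) α β)
      - elt F ψ (some i) (some i) (Matrix.single f1 f1 (1 : F))
        (mu (some i) (some i) (some i) β α)
      - (elt F ψ (some i) (some i) (Matrix.single f0 f0 (1 : F))
          (mu (some i) (some i) (some i) β α)
        - elt F ψ (some i) (some i) (Matrix.single f1 f1 (1 : F))
          (mu (some i) (some i) (some i) β α)) := by abel
  rw [heq]
  exact hmem

theorem commutator_V00_V00_mem_Lsub
    -- sizes: `n_i ≥ 2`, and `n_i ≥ 3` in characteristic 2
    (hn2 : ∀ i : I, 2 ≤ n i) (hn3 : ringChar F = 2 → ∀ i : I, 3 ≤ n i)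
    -- `Λ` is an associative algebra with componentwise products `Λ(i,j)Λ(j,k) ⊆ Λ(i,k)`
    (hassoc : ∀ (i j k l : Option I) (a : Λ i j) (b : Λ j k) (c : Λ k l),
      mu i k l (mu i j k a b) c = mu i j l a (mu j k l b c))
    -- each `Λ(i,i)`, `i ∈ I`, has an identity element `1_i`
    (one : ∀ i : I, Λ (some i) (some i))
    (hone_left : ∀ (i : I) (j : Option I) (a : Λ (some i) j),
      mu (some i) (some i) j (one i) a = a)
    (hone_right : ∀ (i : I) (j : Option I) (a : Λ j (some i)),
      mu j (some i) (some i) a (one i) = a)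
    -- `Λ(0,0) = Σ_{i ∈ I} Λ(0,i)Λ(i,0)`
    (h00 : ∀ x : Λ none none, x ∈ Submodule.span F
      {y : Λ none none | ∃ (i : I) (a : Λ none (some i)) (b : Λ (some i) none),
        y = mu none (some i) none a b})
    -- the product of `A`: `(X ⊗ λ)(Y ⊗ μ) = XY ⊗ λμ` for matching inner indices …
    (hmul : ∀ (i j k : Option I) (X : Matrix (Fin (nopt n i)) (Fin (nopt n j)) F)
      (a : Λ i j) (Y : Matrix (Fin (nopt n j)) (Fin (nopt n k)) F) (b : Λ j k),
      elt F ψ i j X a * elt F ψ j k Y b = elt F ψ i k (X * Y) (mu i j k a b))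
    -- … and `0` otherwise
    (hmul0 : ∀ (i j s t : Option I), j ≠ s →
      ∀ (X : Matrix (Fin (nopt n i)) (Fin (nopt n j)) F) (a : Λ i j)
        (Y : Matrix (Fin (nopt n s)) (Fin (nopt n t)) F) (b : Λ s t),
      elt F ψ i j X a * elt F ψ s t Y b = 0)
    :
    -- the commutator of any two elements of `V_00 ⊗ Λ(0,0)` lies in `L`
    ∀ u v : Matrix (Fin (nopt n none)) (Fin (nopt n none)) F ⊗[F] Λ none none,
      emb F ψ (none, none) u * emb F ψ (none, none) v
        - emb F ψ (none, none) v * emb F ψ (none, none) u ∈ Lsub F ψ := by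
  intro u v
  haveI : Subsingleton (Fin (nopt n none)) := inferInstanceAs (Subsingleton (Fin 1))
  set z0 : Fin (nopt n none) := ⟨0, Nat.one_pos⟩ with hz0
  set E : Matrix (Fin (nopt n none)) (Fin (nopt n none)) F := Matrix.single z0 z0 1
    with hE
  have hsmulcomm : ∀ (r s : F) (x y : A), (r • x) * (s • y) - (s • y) * (r • x)
      = (r * s) • (x * y - y * x) := by
    intro r s x y
    rw [smul_mul_assoc, mul_smul_comm, smul_mul_assoc, mul_smul_comm, smul_smul, smul_smul,
      mul_comm s r, smul_sub]
  have key : ∀ lam mum : Λ none none,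
      elt F ψ none none E lam * elt F ψ none none E mum
        - elt F ψ none none E mum * elt F ψ none none E lam ∈ Lsub F ψ := by
    intro lam mum
    induction h00 lam, h00 mum using Submodule.span_induction₂ with
    | mem_mem x y hx hy =>
      obtain ⟨i, a, b, rfl⟩ := hx
      obtain ⟨j, c, d, rfl⟩ := hy
      set f0i : Fin (nopt n (some i)) := ⟨0, show 0 < n i by have := hn2 i; omega⟩ with hf0i
      set f0j : Fin (nopt n (some j)) := ⟨0, show 0 < n j by have := hn2 j; omega⟩ with hf0j
      -- s ∈ L
      have hs := bracket_mem F ψ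
        (gen_ne_mem F ψ (show (none : Option I) ≠ some i by simp)
          (Matrix.single z0 f0i 1) a)
        (gen_ne_mem F ψ (show (some i : Option I) ≠ none by simp)
          (Matrix.single f0i z0 1) b)
      rw [hmul, hmul, sbm_mul, sbm_mul, if_pos rfl, if_pos rfl, one_mul] at hs
      -- t ∈ L
      have ht := bracket_mem F ψ
        (gen_ne_mem F ψ (show (none : Option I) ≠ some j by simp)
          (Matrix.single z0 f0j 1) c)
        (gen_ne_mem F ψ (show (some j : Option I) ≠ none by simp)
          (Matrix.single f0j z0 1) d)
      rw [hmul, hmul, sbm_mul, sbm_mul, if_pos rfl, if_pos rfl, one_mul] at ht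
      have hst := bracket_mem F ψ hs ht
      set eab := elt F ψ none none E (mu none (some i) none a b) with heab
      set ecd := elt F ψ none none E (mu none (some j) none c d) with hecd
      set eBi := elt F ψ (some i) (some i) (Matrix.single f0i f0i 1)
        (mu (some i) none (some i) b a) with heBi
      set eBj := elt F ψ (some j) (some j) (Matrix.single f0j f0j 1)
        (mu (some j) none (some j) d c) with heBj
      have h1 : eab * eBj = 0 := hmul0 none none (some j) (some j) (by simp) _ _ _ _
      have h2 : ecd * eBi = 0 := hmul0 none none (some i) (some i) (by simp) _ _ _ _
      have h3 : eBi * ecd = 0 := hmul0 (some i) (some i) none none (by simp) _ _ _ _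
      have h4 : eBj * eab = 0 := hmul0 (some j) (some j) none none (by simp) _ _ _ _
      have e1 : (eab - eBi) * (ecd - eBj) = eab * ecd + eBi * eBj := by
        rw [sub_mul, mul_sub, mul_sub, h1, h3]
        abel
      have e2 : (ecd - eBj) * (eab - eBi) = ecd * eab + eBj * eBi := by
        rw [sub_mul, mul_sub, mul_sub, h2, h4]
        abel
      rcases eq_or_ne i j with rfl | hne
      · -- i = j
        have hBij : eBi * eBj = elt F ψ (some i) (some i) (Matrix.single f0i f0i 1)
            (mu (some i) (some i) (some i) (mu (some i) none (some i) b a)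
              (mu (some i) none (some i) d c)) := by
          rw [heBi, heBj, hmul, sbm_mul, if_pos rfl, one_mul]
        have hBji : eBj * eBi = elt F ψ (some i) (some i) (Matrix.single f0i f0i 1)
            (mu (some i) (some i) (some i) (mu (some i) none (some i) d c)
              (mu (some i) none (some i) b a)) := by
          rw [heBi, heBj, hmul, sbm_mul, if_pos rfl, one_mul]
        have hA := stepA F mu ψ hmul i (hn2 i)
          (mu (some i) none (some i) b a) (mu (some i) none (some i) d c)
        have hmem := Submodule.sub_mem _ hst hA
        rw [elt_sub_right] at hmem
        have heq : eab * ecd - ecd * eab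
            = ((eab - eBi) * (ecd - eBj) - (ecd - eBj) * (eab - eBi))
              - (elt F ψ (some i) (some i) (Matrix.single f0i f0i 1)
                  (mu (some i) (some i) (some i) (mu (some i) none (some i) b a)
                    (mu (some i) none (some i) d c))
                - elt F ψ (some i) (some i) (Matrix.single f0i f0i 1)
                  (mu (some i) (some i) (some i) (mu (some i) none (some i) d c)
                    (mu (some i) none (some i) b a))) := by
          rw [e1, e2, ← hBij, ← hBji]
          abel
        rw [heq]
        exact hmem
      · -- i ≠ j
        have h5 : eBi * eBj = 0 := hmul0 (some i) (some i) (some j) (some j)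
          (by simp [hne]) _ _ _ _
        have h6 : eBj * eBi = 0 := hmul0 (some j) (some j) (some i) (some i)
          (by simp [Ne.symm hne]) _ _ _ _
        have heq : eab * ecd - ecd * eab
            = (eab - eBi) * (ecd - eBj) - (ecd - eBj) * (eab - eBi) := by
          rw [e1, e2, h5, h6]
          abel
        rw [heq]
        exact hst
    | zero_left y hy =>
      rw [elt_zero_right, zero_mul, mul_zero, sub_zero]
      exact Submodule.zero_mem _
    | zero_right x hx =>
      rw [elt_zero_right, zero_mul, mul_zero, zero_sub, neg_mem_iff]
      exact Submodule.zero_mem _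
    | add_left x y z hx hy hz hpx hpy =>
      rw [elt_add_right, add_mul, mul_add]
      have := Submodule.add_mem _ hpx hpy
      have heq : elt F ψ none none E x * elt F ψ none none E z
            + elt F ψ none none E y * elt F ψ none none E z
          - (elt F ψ none none E z * elt F ψ none none E x
            + elt F ψ none none E z * elt F ψ none none E y)
        = (elt F ψ none none E x * elt F ψ none none E z
            - elt F ψ none none E z * elt F ψ none none E x)
          + (elt F ψ none none E y * elt F ψ none none E z
            - elt F ψ none none E z * elt F ψ none none E y) := by abel
      rw [heq]
      exact this
    | add_right x y z hx hy hz hpx hpy =>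
      rw [elt_add_right, add_mul, mul_add]
      have := Submodule.add_mem _ hpx hpy
      have heq : elt F ψ none none E x * elt F ψ none none E y
            + elt F ψ none none E x * elt F ψ none none E z
          - (elt F ψ none none E y * elt F ψ none none E x
            + elt F ψ none none E z * elt F ψ none none E x)
        = (elt F ψ none none E x * elt F ψ none none E y
            - elt F ψ none none E y * elt F ψ none none E x)
          + (elt F ψ none none E x * elt F ψ none none E z
            - elt F ψ none none E z * elt F ψ none none E x) := by abel
      rw [heq]
      exact this
    | smul_left r x y hx hy hpx =>
      rw [elt_smul_right, smul_mul_assoc, mul_smul_comm, ← smul_sub]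
      exact Submodule.smul_mem _ r hpx
    | smul_right r x y hx hy hpx =>
      rw [elt_smul_right, smul_mul_assoc, mul_smul_comm, ← smul_sub]
      exact Submodule.smul_mem _ r hpx
  -- reduce general tensors to pure tensors
  have embadd : ∀ u1 u2 : Matrix (Fin (nopt n none)) (Fin (nopt n none)) F ⊗[F] Λ none none,
      emb F ψ (none, none) (u1 + u2) = emb F ψ (none, none) u1 + emb F ψ (none, none) u2 := by
    intro u1 u2
    simp [emb]
  have embzero : emb F ψ (none, none)
      (0 : Matrix (Fin (nopt n none)) (Fin (nopt n none)) F ⊗[F] Λ none none) = 0 := by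
    simp [emb]
  induction u using TensorProduct.induction_on with
  | zero =>
    rw [embzero, zero_mul, mul_zero, sub_zero]
    exact Submodule.zero_mem _
  | tmul X lam =>
    induction v using TensorProduct.induction_on with
    | zero =>
      rw [embzero, zero_mul, mul_zero, zero_sub, neg_mem_iff]
      exact Submodule.zero_mem _
    | tmul Y mum =>
      have hX : X = X z0 z0 • E := by
        ext a b
        have ha : a = z0 := Subsingleton.elim _ _
        have hb : b = z0 := Subsingleton.elim _ _
        subst ha; subst hb
        simp [hE]
      have hY : Y = Y z0 z0 • E := by
        ext a b
        have ha : a = z0 := Subsingleton.elim _ _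
        have hb : b = z0 := Subsingleton.elim _ _
        subst ha; subst hb
        simp [hE]
      have h1 : emb F ψ (none, none) (X ⊗ₜ[F] lam)
          = X z0 z0 • elt F ψ none none E lam := by
        conv_lhs => rw [hX]
        exact elt_smul_left F ψ none none E (X z0 z0) lam
      have h2 : emb F ψ (none, none) (Y ⊗ₜ[F] mum)
          = Y z0 z0 • elt F ψ none none E mum := by
        conv_lhs => rw [hY]
        exact elt_smul_left F ψ none none E (Y z0 z0) mum
      rw [h1, h2, hsmulcomm]
      exact Submodule.smul_mem _ _ (key lam mum)
    | add v1 v2 hv1 hv2 =>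
      rw [embadd, mul_add, add_mul]
      have := Submodule.add_mem _ hv1 hv2
      have heq : emb F ψ (none, none) (X ⊗ₜ[F] lam) * emb F ψ (none, none) v1
            + emb F ψ (none, none) (X ⊗ₜ[F] lam) * emb F ψ (none, none) v2
          - (emb F ψ (none, none) v1 * emb F ψ (none, none) (X ⊗ₜ[F] lam)
            + emb F ψ (none, none) v2 * emb F ψ (none, none) (X ⊗ₜ[F] lam))
        = (emb F ψ (none, none) (X ⊗ₜ[F] lam) * emb F ψ (none, none) v1
            - emb F ψ (none, none) v1 * emb F ψ (none, none) (X ⊗ₜ[F] lam))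
          + (emb F ψ (none, none) (X ⊗ₜ[F] lam) * emb F ψ (none, none) v2
            - emb F ψ (none, none) v2 * emb F ψ (none, none) (X ⊗ₜ[F] lam)) := by abel
      rw [heq]
      exact this
  | add u1 u2 hu1 hu2 =>
    rw [embadd, mul_add, add_mul]
    have := Submodule.add_mem _ hu1 hu2
    have heq : emb F ψ (none, none) u1 * emb F ψ (none, none) v
          + emb F ψ (none, none) u2 * emb F ψ (none, none) v
        - (emb F ψ (none, none) v * emb F ψ (none, none) u1
          + emb F ψ (none, none) v * emb F ψ (none, none) u2)
      = (emb F ψ (none, none) u1 * emb F ψ (none, none) v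
          - emb F ψ (none, none) v * emb F ψ (none, none) u1)
        + (emb F ψ (none, none) u2 * emb F ψ (none, none) v
          - emb F ψ (none, none) v * emb F ψ (none, none) u2) := by abel
    rw [heq]
    exact this
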